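/- With p = 1/n and n → ∞, the quantity (1-(1-p)^n)^2 / (2 p^2 (1-p)^{n-1}) is asymptotic to ((e-1)²/(2e)) n², which is approximately 0.543 n². -/

import Mathlib

open Filter Topology Real

/-- With `p = 1/n` and `n → ∞`, `(1-(1-p)^n)² / (2p²(1-p)^{n-1})` is asymptotic to
`((e-1)²/(2e)) n²`. -/
theorem resampling_ea_lo_asymptotic :
    Filter.Tendsto
      (fun n : ℕ =>
        ((1 - (1 - 1 / (n : ℝ)) ^ n) ^ 2 /
            (2 * (1 / (n : ℝ)) ^ 2 * (1 - 1 / (n : ℝ)) ^ (n - 1))) / (n : ℝ) ^ 2)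
      atTop (nhds ((Real.exp 1 - 1) ^ 2 / (2 * Real.exp 1))) := by
  have ha : Tendsto (fun n : ℕ => (1 - 1 / (n : ℝ)) ^ n) atTop (𝓝 (Real.exp (-1))) := by
    have := Real.tendsto_one_add_div_pow_exp (-1)
    simpa [sub_eq_add_neg, neg_div] using this
  have hc : Tendsto (fun n : ℕ => (1 - 1 / (n : ℝ))) atTop (𝓝 1) := by
    have h1 : Tendsto (fun n : ℕ => 1 / (n : ℝ)) atTop (𝓝 0) :=
      tendsto_one_div_atTop_nhds_zero_nat
    simpa using (tendsto_const_nhds (x := (1:ℝ))).sub h1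
  have hb : Tendsto (fun n : ℕ => (1 - 1 / (n : ℝ)) ^ (n - 1)) atTop (𝓝 (Real.exp (-1))) := by
    have hdiv : Tendsto (fun n : ℕ => (1 - 1 / (n : ℝ)) ^ n / (1 - 1 / (n : ℝ))) atTop
        (𝓝 (Real.exp (-1) / 1)) := ha.div hc one_ne_zero
    rw [div_one] at hdiv
    apply hdiv.congr'
    filter_upwards [eventually_ge_atTop 2] with n hn
    have hn0 : (n : ℝ) ≠ 0 := by positivity
    have hne : (1 - 1 / (n : ℝ)) ≠ 0 := by
      have : (1:ℝ)/n < 1 := by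
        rw [div_lt_one (by positivity)]
        exact_mod_cast lt_of_lt_of_le one_lt_two hn
      linarith
    rw [pow_sub₀ _ hne (by omega : 1 ≤ n), pow_one, div_eq_mul_inv]
  have hg : Tendsto (fun n : ℕ => (1 - (1 - 1 / (n : ℝ)) ^ n) ^ 2 /
      (2 * (1 - 1 / (n : ℝ)) ^ (n - 1))) atTop
      (𝓝 ((1 - Real.exp (-1)) ^ 2 / (2 * Real.exp (-1)))) := by
    apply Tendsto.div
    · exact (((tendsto_const_nhds (x := (1:ℝ))).sub ha).pow 2)
    · exact (tendsto_const_nhds (x := (2:ℝ))).mul hb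
    · positivity
  have hval : (1 - Real.exp (-1)) ^ 2 / (2 * Real.exp (-1))
      = (Real.exp 1 - 1) ^ 2 / (2 * Real.exp 1) := by
    rw [Real.exp_neg]
    have h := Real.exp_ne_zero 1
    have h2 : Real.exp 2 = Real.exp 1 * Real.exp 1 := by
      rw [← Real.exp_add]; norm_num
    field_simp
  rw [← hval]
  apply hg.congr'
  filter_upwards [eventually_ge_atTop 2] with n hn
  have hn0 : (n : ℝ) ≠ 0 := by positivity
  rw [div_div]
  congr 1
  field_simp
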